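/- In the Pareto setting with initial vertex v_0, for every strategy σ_0 of player 0 and every play π from v_0 consistent with σ_0, there exists a σ_0-fixed Pareto-optimal play π′ consistent with σ_0 such that pay(π′) ≤ pay(π) componentwise. Consequently, the set C_{σ_0} of minimal payoffs of plays consistent with σ_0 is a nonempty antichain for the componentwise order on (ℕ∪{+∞})^t. -/

import Mathlib

open scoped Classical

/-- An infinite play in the graph with edge relation `E`. -/
def IsPlay {V : Type*} (E : V → V → Prop) (π : ℕ → V) : Prop :=
  ∀ k, E (π k) (π (k + 1))

/-- The history `π 0, …, π k` as a list. -/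
def histList {V : Type*} (π : ℕ → V) (k : ℕ) : List V :=
  (List.range (k + 1)).map π

/-- The accumulated weight of the first `n` edges of `π`. -/
def pathWeight {V : Type*} (w : V → V → ℕ) (π : ℕ → V) (n : ℕ) : ℕ :=
  ∑ j ∈ Finset.range n, w (π j) (π (j + 1))

/-- The cost of a play for weight function `w` and target set `T` : the accumulated
weight up to the first visit of `T`, and `+∞` if `T` is never visited. -/
noncomputable def cost {V : Type*} (w : V → V → ℕ) (T : Set V) (π : ℕ → V) : ℕ∞ :=
  if h : ∃ n, π n ∈ T then (pathWeight w π (Nat.find h) : ℕ∞) else ⊤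

/-- `σ` is a strategy for the player owning the set of vertices `Vi`. -/
def IsStrategy {V : Type*} (E : V → V → Prop) (Vi : Set V) (σ : List V → V) : Prop :=
  ∀ (l : List V) (u : V), List.Chain' E (l ++ [u]) → u ∈ Vi → E u (σ (l ++ [u]))

/-- A play is consistent with the strategy `σ` of the player owning `Vi`. -/
def PlayConsistent {V : Type*} (Vi : Set V) (σ : List V → V) (π : ℕ → V) : Prop :=
  ∀ k, π k ∈ Vi → π (k + 1) = σ (histList π k)

/-- `π` is a lasso `μ (ν)^ω` where `|μ| = a` and `|ν| = b`. -/
def IsLasso {V : Type*} (π : ℕ → V) (a b : ℕ) : Prop :=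
  0 < b ∧ ∀ k, a ≤ k → π (k + b) = π k

/-- The payoff of a play: the tuple of the `t` environment costs, with the
componentwise partial order. -/
noncomputable def pay {V : Type*} {t : ℕ} (w : Fin t → V → V → ℕ) (T : Fin t → Set V)
    (π : ℕ → V) : Fin t → ℕ∞ :=
  fun i => cost (w i) (T i) π

/-- `π` is `σ0`-fixed Pareto-optimal: no play from `v0` consistent with `σ0` has a
strictly smaller payoff. -/
def ParetoOptimal {V : Type*} {t : ℕ} (E : V → V → Prop) (V0 : Set V) (v0 : V)
    (w : Fin t → V → V → ℕ) (T : Fin t → Set V) (σ0 : List V → V) (π : ℕ → V) : Prop :=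
  ¬ ∃ π', IsPlay E π' ∧ π' 0 = v0 ∧ PlayConsistent V0 σ0 π' ∧ pay w T π' < pay w T π

section Aux

variable {V : Type*}

lemma histList_eq (π : ℕ → V) (n : ℕ) :
    histList π n = (List.range n).map π ++ [π n] := by
  simp [histList, List.range_succ]

lemma histList_getLastD (π : ℕ → V) (n : ℕ) (d : V) :
    (histList π n).getLastD d = π n := by
  rw [histList_eq]; simp

lemma chain_histList {E : V → V → Prop} {π : ℕ → V} {n : ℕ}
    (h : ∀ m < n, E (π m) (π (m + 1))) : List.Chain' E (histList π n) := by
  rw [histList, List.Chain', List.isChain_map, List.isChain_range_succ]; exact h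

noncomputable def pstep (E : V → V → Prop) (hE : ∀ u, ∃ v, E u v) (V0 : Set V)
    (σ0 : List V → V) (v0 : V) (l : List V) : V :=
  if l.getLastD v0 ∈ V0 then σ0 l else Classical.choose (hE (l.getLastD v0))

noncomputable def phist (E : V → V → Prop) (hE : ∀ u, ∃ v, E u v) (V0 : Set V)
    (σ0 : List V → V) (v0 : V) : ℕ → List V
  | 0 => [v0]
  | n + 1 => phist E hE V0 σ0 v0 n ++ [pstep E hE V0 σ0 v0 (phist E hE V0 σ0 v0 n)]

noncomputable def bplay (E : V → V → Prop) (hE : ∀ u, ∃ v, E u v) (V0 : Set V)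
    (σ0 : List V → V) (v0 : V) (n : ℕ) : V :=
  (phist E hE V0 σ0 v0 n).getLastD v0

variable (E : V → V → Prop) (hE : ∀ u, ∃ v, E u v) (V0 : Set V)
    (σ0 : List V → V) (v0 : V)

lemma bplay_zero : bplay E hE V0 σ0 v0 0 = v0 := rfl

lemma histList_succ (π : ℕ → V) (n : ℕ) :
    histList π (n + 1) = histList π n ++ [π (n + 1)] := by
  simp [histList, List.range_succ]

lemma phist_eq (n : ℕ) :
    phist E hE V0 σ0 v0 n = histList (bplay E hE V0 σ0 v0) n := by
  induction n with
  | zero => rw [histList_eq]; rfl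
  | succ n ih =>
      have hb : bplay E hE V0 σ0 v0 (n + 1)
          = pstep E hE V0 σ0 v0 (phist E hE V0 σ0 v0 n) := by
        simp [bplay, phist]
      rw [histList_succ, phist, ih, hb, ih]

lemma bplay_succ (n : ℕ) :
    bplay E hE V0 σ0 v0 (n + 1)
      = pstep E hE V0 σ0 v0 (histList (bplay E hE V0 σ0 v0) n) := by
  rw [← phist_eq]; simp [bplay, phist]

lemma bplay_isPlay (hσ0 : IsStrategy E V0 σ0) : IsPlay E (bplay E hE V0 σ0 v0) := by
  set π := bplay E hE V0 σ0 v0 with hπ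
  intro n
  induction n using Nat.strong_induction_on with
  | _ n ih =>
      have hch : List.Chain' E (histList π n) := chain_histList ih
      have hlast : (histList π n).getLastD v0 = π n := histList_getLastD π n v0
      have key : π (n + 1) = pstep E hE V0 σ0 v0 (histList π n) := by
        rw [hπ]; exact bplay_succ E hE V0 σ0 v0 n
      rw [pstep] at key
      simp only [hlast] at key
      by_cases hmem : π n ∈ V0
      · rw [if_pos hmem] at key
        rw [key]
        have := hσ0 ((List.range n).map π) (π n) (by rwa [← histList_eq]) hmem
        rwa [← histList_eq] at this
      · rw [if_neg hmem] at key
        rw [key]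
        exact Classical.choose_spec (hE (π n))

lemma bplay_consistent : PlayConsistent V0 σ0 (bplay E hE V0 σ0 v0) := by
  set π := bplay E hE V0 σ0 v0 with hπ
  intro k hk
  have key : π (k + 1) = pstep E hE V0 σ0 v0 (histList π k) := by
    rw [hπ]; exact bplay_succ E hE V0 σ0 v0 k
  rw [pstep] at key
  simp only [histList_getLastD π k v0] at key
  rw [if_pos hk] at key
  exact key

end Aux

/-- For every strategy `σ0` of player 0 and every play `π` from `v0` consistent with
`σ0`, there is a `σ0`-fixed Pareto-optimal play `π'` consistent with `σ0` with
`pay π' ≤ pay π` componentwise; consequently, the set `C_{σ0}` of minimal payoffs of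
plays consistent with `σ0` is a nonempty antichain for the componentwise order. -/


theorem pareto_optimal_exists_and_antichain {V : Type*} [Fintype V]
    (E : V → V → Prop) (hE : ∀ u, ∃ v, E u v) (V0 : Set V) (v0 : V) (t : ℕ)
    (w0 : V → V → ℕ) (T0 : Set V) (w : Fin t → V → V → ℕ) (T : Fin t → Set V)
    (σ0 : List V → V) (hσ0 : IsStrategy E V0 σ0) :
    (∀ π : ℕ → V, IsPlay E π → π 0 = v0 → PlayConsistent V0 σ0 π →
      ∃ π' : ℕ → V, IsPlay E π' ∧ π' 0 = v0 ∧ PlayConsistent V0 σ0 π' ∧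
        ParetoOptimal E V0 v0 w T σ0 π' ∧ pay w T π' ≤ pay w T π) ∧
    ({p : Fin t → ℕ∞ | ∃ π : ℕ → V, IsPlay E π ∧ π 0 = v0 ∧
        PlayConsistent V0 σ0 π ∧ ParetoOptimal E V0 v0 w T σ0 π ∧
        pay w T π = p}.Nonempty ∧
      IsAntichain (· ≤ ·) {p : Fin t → ℕ∞ | ∃ π : ℕ → V, IsPlay E π ∧ π 0 = v0 ∧
        PlayConsistent V0 σ0 π ∧ ParetoOptimal E V0 v0 w T σ0 π ∧
        pay w T π = p}) := by
  classical
  have main : ∀ π : ℕ → V, IsPlay E π → π 0 = v0 → PlayConsistent V0 σ0 π →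
      ∃ π' : ℕ → V, IsPlay E π' ∧ π' 0 = v0 ∧ PlayConsistent V0 σ0 π' ∧
        ParetoOptimal E V0 v0 w T σ0 π' ∧ pay w T π' ≤ pay w T π := by
    intro π hp h0 hc
    set A : Set (Fin t → ℕ∞) := {p | (∃ π', IsPlay E π' ∧ π' 0 = v0 ∧
        PlayConsistent V0 σ0 π' ∧ pay w T π' = p) ∧ p ≤ pay w T π} with hA
    have hmem : pay w T π ∈ A := ⟨⟨π, hp, h0, hc, rfl⟩, le_refl _⟩
    obtain ⟨p, hpA, hmin⟩ :=
      (wellFounded_lt (α := Fin t → ℕ∞)).has_min A ⟨_, hmem⟩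
    obtain ⟨⟨π', h1, h2, h3, h4⟩, h5⟩ := hpA
    refine ⟨π', h1, h2, h3, ?_, h4 ▸ h5⟩
    rintro ⟨π'', g1, g2, g3, g4⟩
    rw [h4] at g4
    exact hmin _ ⟨⟨π'', g1, g2, g3, rfl⟩, le_trans g4.le h5⟩ g4
  refine ⟨main, ?_, ?_⟩
  · obtain ⟨π', h1, h2, h3, h4, -⟩ := main (bplay E hE V0 σ0 v0)
      (bplay_isPlay E hE V0 σ0 v0 hσ0) (bplay_zero E hE V0 σ0 v0)
      (bplay_consistent E hE V0 σ0 v0)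
    exact ⟨pay w T π', π', h1, h2, h3, h4, rfl⟩
  · rintro p ⟨πp, p1, p2, p3, p4, p5⟩ q ⟨πq, q1, q2, q3, q4, q5⟩ hne hle
    exact q4 ⟨πp, p1, p2, p3, by rw [p5, q5]; exact lt_of_le_of_ne hle hne⟩
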